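/- arXiv:math-ph/0406014 — 4 statements merged into one kernel-verified Lean document; each statement's English description precedes it below -/
import Mathlib

section
/- The function x ↦ 1 + x⁴ − x²·√(x⁴+2) is nonnegative on [0,∞) and is integrable on (0,∞) with respect to Lebesgue measure. -/
open MeasureTheory

lemma foldy_nonneg (x : ℝ) : 0 ≤ 1 + x ^ 4 - x ^ 2 * Real.sqrt (x ^ 4 + 2) := by
  have h2 : (0:ℝ) ≤ x ^ 4 + 2 := by positivity
  have h1 : x ^ 2 * Real.sqrt (x ^ 4 + 2) = Real.sqrt (x ^ 4 * (x ^ 4 + 2)) := by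
    rw [Real.sqrt_mul (by positivity), show x ^ 4 = (x ^ 2) ^ 2 by ring,
      Real.sqrt_sq (sq_nonneg x)]
  have h3 : Real.sqrt (x ^ 4 * (x ^ 4 + 2)) ≤ 1 + x ^ 4 := by
    rw [show (1 + x ^ 4) = Real.sqrt ((1 + x ^ 4) ^ 2) from
      (Real.sqrt_sq (by positivity)).symm]
    exact Real.sqrt_le_sqrt (by nlinarith)
  linarith [h1 ▸ h3]

lemma foldy_le (x : ℝ) :
    1 + x ^ 4 - x ^ 2 * Real.sqrt (x ^ 4 + 2) ≤ 2 / (1 + x ^ 2) := by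
  set s := Real.sqrt (x ^ 4 + 2) with hs_def
  have hs0 : 0 ≤ s := Real.sqrt_nonneg _
  have hs : s ^ 2 = x ^ 4 + 2 := Real.sq_sqrt (by positivity)
  have hD : (0:ℝ) < 1 + x ^ 4 + x ^ 2 * s := by positivity
  have hf : 1 + x ^ 4 - x ^ 2 * s = 1 / (1 + x ^ 4 + x ^ 2 * s) := by
    rw [eq_div_iff (ne_of_gt hD)]
    nlinarith [hs]
  rw [hf]
  calc 1 / (1 + x ^ 4 + x ^ 2 * s) ≤ 1 / (1 + x ^ 4) := by
        apply one_div_le_one_div_of_le (by positivity)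
        nlinarith [mul_nonneg (sq_nonneg x) hs0]
    _ ≤ 2 / (1 + x ^ 2) := by
        rw [div_le_div_iff₀ (by positivity) (by positivity)]
        nlinarith [sq_nonneg (x ^ 2 - 1)]

/-- The function `x ↦ 1 + x⁴ − x²√(x⁴+2)` is nonnegative on `[0,∞)` and integrable
    on `(0,∞)`. -/
theorem foldy_integrand_nonneg_integrable :
    (∀ x : ℝ, 0 ≤ x → 0 ≤ 1 + x ^ 4 - x ^ 2 * Real.sqrt (x ^ 4 + 2)) ∧
    IntegrableOn (fun x : ℝ => 1 + x ^ 4 - x ^ 2 * Real.sqrt (x ^ 4 + 2))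
      (Set.Ioi 0) volume := by
  constructor
  · exact fun x _ => foldy_nonneg x
  · have hg : Integrable (fun x : ℝ => 2 / (1 + x ^ 2)) := by
      simpa [div_eq_mul_inv] using (integrable_inv_one_add_sq).const_mul 2
    have hcont : Continuous fun x : ℝ => 1 + x ^ 4 - x ^ 2 * Real.sqrt (x ^ 4 + 2) := by
      fun_prop
    apply (hg.integrableOn).mono' hcont.aestronglyMeasurable.restrict
    filter_upwards with x
    rw [Real.norm_eq_abs, abs_of_nonneg (foldy_nonneg x)]
    exact foldy_le x
end

section
/- The function ξ(t) = √(t(t+1)) is operator concave on [0,∞): for all positive semidefinite operators A, B on a Hilbert space (or positive semidefinite matrices) and all λ ∈ [0,1], ξ(λA + (1−λ)B) ≥ λ·ξ(A) + (1−λ)·ξ(B) in the Loewner order. -/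
open scoped ComplexOrder
namespace OpConc
variable {n : ℕ}

lemma cfc_mul_cfc (M : Matrix (Fin n) (Fin n) ℂ) (hM : M.IsHermitian) (f g : ℝ → ℝ) :
    hM.cfc f * hM.cfc g = hM.cfc (fun t => f t * g t) := by
  simp only [Matrix.IsHermitian.cfc, Unitary.conjStarAlgAut_apply, mul_assoc]
  rw [← mul_assoc (star (hM.eigenvectorUnitary : Matrix (Fin n) (Fin n) ℂ)),
    Unitary.star_mul_self_of_mem (Subtype.mem _), one_mul,
    ← mul_assoc (Matrix.diagonal _), Matrix.diagonal_mul_diagonal]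
  congr 2
  ext i j
  by_cases h : i = j <;> simp [Matrix.diagonal_apply, h]

lemma cfc_herm (M : Matrix (Fin n) (Fin n) ℂ) (hM : M.IsHermitian) (f : ℝ → ℝ) :
    (hM.cfc f).IsHermitian := by
  unfold Matrix.IsHermitian.cfc
  simp only [Matrix.IsHermitian, Unitary.conjStarAlgAut_apply, Matrix.conjTranspose_mul, ← Matrix.star_eq_conjTranspose,
    star_star, Matrix.star_eq_conjTranspose, Matrix.diagonal_conjTranspose, mul_assoc]
  have : star (RCLike.ofReal ∘ f ∘ hM.eigenvalues : Fin n → ℂ)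
      = RCLike.ofReal ∘ f ∘ hM.eigenvalues := by
    funext i
    simp [Pi.star_def, Complex.conj_ofReal]
  rw [this, Matrix.conjTranspose_conjTranspose]

lemma cfc_psd (M : Matrix (Fin n) (Fin n) ℂ) (hM : M.IsHermitian) (f : ℝ → ℝ)
    (h : ∀ i, 0 ≤ f (hM.eigenvalues i)) : (hM.cfc f).PosSemidef := by
  unfold Matrix.IsHermitian.cfc
  simp only [Unitary.conjStarAlgAut_apply]
  rw [Matrix.star_eq_conjTranspose]
  exact (Matrix.PosSemidef.diagonal (fun i => by
    simpa using (by exact_mod_cast h i : (0:ℂ) ≤ (f (hM.eigenvalues i) : ℂ)))).mul_mul_conjTranspose_same _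

lemma cfc_id' (M : Matrix (Fin n) (Fin n) ℂ) (hM : M.IsHermitian) :
    hM.cfc (fun t => t) = M := by
  conv_rhs => rw [hM.spectral_theorem]
  rfl

lemma cfc_one' (M : Matrix (Fin n) (Fin n) ℂ) (hM : M.IsHermitian) :
    hM.cfc (fun _ => 1) = 1 := by
  unfold Matrix.IsHermitian.cfc
  simp only [Unitary.conjStarAlgAut_apply]
  have : Matrix.diagonal (RCLike.ofReal ∘ (fun _ : ℝ => (1:ℝ)) ∘ hM.eigenvalues)
      = (1 : Matrix (Fin n) (Fin n) ℂ) := by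
    ext i j; simp [Matrix.diagonal, Matrix.one_apply]
  rw [this, mul_one, Unitary.mul_star_self_of_mem (Subtype.mem _)]

lemma cfc_add' (M : Matrix (Fin n) (Fin n) ℂ) (hM : M.IsHermitian) (f g : ℝ → ℝ) :
    hM.cfc (fun t => f t + g t) = hM.cfc f + hM.cfc g := by
  unfold Matrix.IsHermitian.cfc
  simp only [Unitary.conjStarAlgAut_apply]
  rw [← Matrix.add_mul, ← Matrix.mul_add]
  congr 2
  ext i j
  simp [Matrix.diagonal]
  split <;> simp

end OpConc

namespace OpConc2
open Matrix
variable {n : ℕ}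

/-- Key algebraic inequality: `X P⁻¹ X + Y Q⁻¹ Y - (X+Y)(P+Q)⁻¹(X+Y)` is PSD. -/
lemma key_ineq (X Y P Q P' Q' T : Matrix (Fin n) (Fin n) ℂ)
    (hX : X.IsHermitian) (hY : Y.IsHermitian) (hP : P.IsHermitian) (hQ : Q.IsHermitian)
    (hP'psd : P'.PosSemidef) (hQ'psd : Q'.PosSemidef) (hT : T.IsHermitian)
    (hPP' : P * P' = 1) (hP'P : P' * P = 1) (hQQ' : Q * Q' = 1) (hQ'Q : Q' * Q = 1)
    (hDT : (P + Q) * T = 1) (hTD : T * (P + Q) = 1) :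
    (X * P' * X + Y * Q' * Y - (X + Y) * T * (X + Y)).PosSemidef := by
  have e1 : T * Q = 1 - T * P := by
    have := hTD; rw [mul_add] at this; linear_combination (norm := noncomm_ring) this
  have e2 : Q * T = 1 - P * T := by
    have := hDT; rw [add_mul] at this; linear_combination (norm := noncomm_ring) this
  have sPP' : ∀ m : Matrix (Fin n) (Fin n) ℂ, P * (P' * m) = m := fun m => by
    rw [← mul_assoc, hPP', one_mul]
  have sP'P : ∀ m : Matrix (Fin n) (Fin n) ℂ, P' * (P * m) = m := fun m => by
    rw [← mul_assoc, hP'P, one_mul]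
  have sQQ' : ∀ m : Matrix (Fin n) (Fin n) ℂ, Q * (Q' * m) = m := fun m => by
    rw [← mul_assoc, hQQ', one_mul]
  have sQ'Q : ∀ m : Matrix (Fin n) (Fin n) ℂ, Q' * (Q * m) = m := fun m => by
    rw [← mul_assoc, hQ'Q, one_mul]
  have sTQ : ∀ m : Matrix (Fin n) (Fin n) ℂ, T * (Q * m) = m - T * (P * m) := fun m => by
    rw [← mul_assoc, e1, sub_mul, one_mul, mul_assoc]
  have sQ'P : ∀ m : Matrix (Fin n) (Fin n) ℂ, Q' * (P * (T * m)) = Q' * m - T * m := fun m => by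
    have : P * T = 1 - Q * T := by
      linear_combination (norm := noncomm_ring) e2
    rw [← mul_assoc, ← mul_assoc, mul_assoc Q' P T, this, mul_sub, mul_one, ← mul_assoc, hQ'Q,
      one_mul]
    noncomm_ring
  set K := P * T * Q with hK
  have hKherm : Kᴴ = K := by
    have h1 : Kᴴ = Q * T * P := by
      rw [hK, Matrix.conjTranspose_mul, Matrix.conjTranspose_mul, hP.eq, hQ.eq, hT.eq]
      noncomm_ring
    rw [h1, hK]
    calc Q * T * P = (1 - P * T) * P := by rw [e2]
    _ = P - P * T * P := by noncomm_ring
    _ = P * (1 - T * P) := by noncomm_ring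
    _ = P * (T * Q) := by rw [e1]
    _ = P * T * Q := by noncomm_ring
  have hKright : K * (P' + Q') = 1 := by
    rw [hK, mul_add]
    have h1 : P * T * Q * Q' = P * T := by rw [mul_assoc, hQQ', mul_one]
    have h2 : P * T * Q * P' = 1 - P * T := by
      rw [mul_assoc P T Q, e1]
      calc P * (1 - T * P) * P' = P * P' - P * T * (P * P') := by noncomm_ring
      _ = 1 - P * T := by rw [hPP', mul_one]
    rw [h2, h1]; noncomm_ring
  have hKpsd : K.PosSemidef := by
    have : K = Kᴴ * (P' + Q') * K := by
      rw [hKherm, mul_assoc, ← mul_assoc, hKright, one_mul]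
    rw [this]
    exact (hP'psd.add hQ'psd).conjTranspose_mul_mul_same K
  have hWherm : (P' * X - Q' * Y)ᴴ = X * P' - Y * Q' := by
    rw [Matrix.conjTranspose_sub, Matrix.conjTranspose_mul, Matrix.conjTranspose_mul,
      hX.eq, hY.eq, hP'psd.isHermitian.eq, hQ'psd.isHermitian.eq]
  have main : (P' * X - Q' * Y)ᴴ * K * (P' * X - Q' * Y)
      = X * P' * X + Y * Q' * Y - (X + Y) * T * (X + Y) := by
    rw [hWherm, hK]
    simp only [Matrix.mul_sub, Matrix.sub_mul, Matrix.mul_add, Matrix.add_mul, mul_assoc,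
      sPP', sP'P, sQQ', sQ'Q, sTQ, sQ'P]
    noncomm_ring
  rw [← main]
  exact hKpsd.conjTranspose_mul_mul_same _

end OpConc2

namespace OpConc3
open Matrix
variable {n : ℕ}

lemma sub_psd_of_sq_sub_sq_psd (G S : Matrix (Fin n) (Fin n) ℂ)
    (hG : G.PosSemidef) (hS : S.PosSemidef) (h : (G * G - S * S).PosSemidef) :
    (G - S).PosSemidef := by
  have hM : (G - S).IsHermitian := hG.isHermitian.sub hS.isHermitian
  simp only [hM.posSemidef_iff_eigenvalues_nonneg, Pi.le_def, Pi.zero_apply]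
  intro i
  set μ : ℝ := hM.eigenvalues i with hμ
  set v : Fin n → ℂ := ⇑(hM.eigenvectorBasis i) with hvdef
  have hv : (G - S) *ᵥ v = (μ : ℂ) • v := by
    have := hM.mulVec_eigenvectorBasis i
    rw [this]
    ext j
    simp [hvdef, hμ, RCLike.real_smul_eq_coe_smul (K := ℂ)]
  have hvne : v ≠ 0 := by
    have := hM.eigenvectorBasis.orthonormal.ne_zero i
    intro hc
    apply this
    ext j
    exact congrFun hc j
  -- key inequality
  have hsplit : G * G - S * S = (G - S) * G + S * (G - S) := by noncomm_ring
  have hstar : star v ᵥ* (G - S) = (μ : ℂ) • star v := by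
    have h1 : star v ᵥ* (G - S) = star ((G - S) *ᵥ v) := by
      rw [star_mulVec, hM.eq]
    rw [h1, hv, star_smul]
    simp
  have hkey : 0 ≤ (μ : ℂ) * (star v ⬝ᵥ G *ᵥ v + star v ⬝ᵥ S *ᵥ v) := by
    have h0 := h.dotProduct_mulVec_nonneg v
    rw [hsplit] at h0
    rw [add_mulVec, dotProduct_add] at h0
    have hA : star v ⬝ᵥ ((G - S) * G) *ᵥ v = (μ : ℂ) * (star v ⬝ᵥ G *ᵥ v) := by
      rw [← mulVec_mulVec, dotProduct_mulVec, hstar, smul_dotProduct, smul_eq_mul]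
    have hB : star v ⬝ᵥ (S * (G - S)) *ᵥ v = (μ : ℂ) * (star v ⬝ᵥ S *ᵥ v) := by
      rw [← mulVec_mulVec, hv, mulVec_smul, dotProduct_smul, smul_eq_mul]
    rw [hA, hB, ← mul_add] at h0
    exact h0
  have hGv : 0 ≤ star v ⬝ᵥ G *ᵥ v := hG.dotProduct_mulVec_nonneg v
  have hSv : 0 ≤ star v ⬝ᵥ S *ᵥ v := hS.dotProduct_mulVec_nonneg v
  set c : ℂ := star v ⬝ᵥ G *ᵥ v + star v ⬝ᵥ S *ᵥ v with hc
  by_cases hc0 : c = 0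
  · -- both terms vanish, so G v = S v = 0 and μ = 0
    have hG0 : star v ⬝ᵥ G *ᵥ v = 0 := by
      have h1 : star v ⬝ᵥ G *ᵥ v ≤ 0 := by
        calc star v ⬝ᵥ G *ᵥ v ≤ star v ⬝ᵥ G *ᵥ v + star v ⬝ᵥ S *ᵥ v := le_add_of_nonneg_right hSv
        _ = 0 := hc0
      exact le_antisymm h1 hGv
    have hS0 : star v ⬝ᵥ S *ᵥ v = 0 := by
      have h1 : star v ⬝ᵥ S *ᵥ v ≤ 0 := by
        calc star v ⬝ᵥ S *ᵥ v ≤ star v ⬝ᵥ G *ᵥ v + star v ⬝ᵥ S *ᵥ v := le_add_of_nonneg_left hGv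
        _ = 0 := hc0
      exact le_antisymm h1 hSv
    have hGv0 : G *ᵥ v = 0 := (hG.dotProduct_mulVec_zero_iff v).mp hG0
    have hSv0 : S *ᵥ v = 0 := (hS.dotProduct_mulVec_zero_iff v).mp hS0
    have : (μ : ℂ) • v = 0 := by
      rw [← hv, sub_mulVec, hGv0, hSv0, sub_zero]
    rcases smul_eq_zero.mp this with h' | h'
    · simp only [Complex.ofReal_eq_zero] at h'
      rw [h']
    · exact absurd h' hvne
  · -- c > 0 real
    have hcnn : 0 ≤ c := add_nonneg hGv hSv
    have hcre : 0 < c.re := by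
      rcases (Complex.le_def.mp hcnn) with ⟨hre, him⟩
      rcases lt_or_eq_of_le (by simpa using hre) with h' | h'
      · exact h'
      · exfalso; apply hc0; apply Complex.ext <;> simp [← h', ← him]
    have h1 : 0 ≤ ((μ : ℂ) * c).re := (Complex.le_def.mp hkey).1
    have h2 : ((μ : ℂ) * c).re = μ * c.re := by
      simp [Complex.mul_re]
    rw [h2] at h1
    nlinarith

end OpConc3

namespace OpConc
variable {n : ℕ}

lemma cfc_smul' (M : Matrix (Fin n) (Fin n) ℂ) (hM : M.IsHermitian) (c : ℝ) (f : ℝ → ℝ) :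
    hM.cfc (fun t => c * f t) = c • hM.cfc f := by
  unfold Matrix.IsHermitian.cfc
  have hd : Matrix.diagonal (RCLike.ofReal ∘ (fun t => c * f t) ∘ hM.eigenvalues)
      = c • Matrix.diagonal (RCLike.ofReal ∘ f ∘ hM.eigenvalues : Fin n → ℂ) := by
    ext i j
    by_cases hij : i = j <;> simp [Matrix.diagonal_apply, hij, Complex.real_smul]
  simp only [Unitary.conjStarAlgAut_apply]
  rw [hd, Matrix.mul_smul, Matrix.smul_mul]

lemma cfc_congr' (M : Matrix (Fin n) (Fin n) ℂ) (hM : M.IsHermitian) (f g : ℝ → ℝ)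
    (h : ∀ i, f (hM.eigenvalues i) = g (hM.eigenvalues i)) : hM.cfc f = hM.cfc g := by
  unfold Matrix.IsHermitian.cfc
  have hd : (RCLike.ofReal ∘ f ∘ hM.eigenvalues : Fin n → ℂ)
      = RCLike.ofReal ∘ g ∘ hM.eigenvalues := by
    funext i
    simp [h i]
  rw [hd]

lemma psd_smul (M : Matrix (Fin n) (Fin n) ℂ) (hM : M.PosSemidef) (c : ℝ) (hc : 0 ≤ c) :
    (c • M).PosSemidef := by
  refine Matrix.PosSemidef.of_dotProduct_mulVec_nonneg ?_ ?_
  · unfold Matrix.IsHermitian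
    rw [Matrix.conjTranspose_smul, hM.isHermitian.eq, star_trivial]
  · intro x
    rw [Matrix.smul_mulVec, dotProduct_smul]
    rw [Complex.real_smul]
    exact mul_nonneg (by exact_mod_cast hc) (hM.dotProduct_mulVec_nonneg x)

end OpConc


open Matrix OpConc OpConc2 OpConc3

/-- The function `ξ(t) = √(t(t+1))` is operator concave on positive semidefinite
matrices: for PSD matrices `A, B` and `l ∈ [0,1]`,
`ξ(l•A + (1−l)•B) ≥ l•ξ(A) + (1−l)•ξ(B)` in the Loewner order, where `ξ` is
applied via the continuous functional calculus. -/
theorem sqrt_t_mul_t_add_one_operatorConcave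
    (n : ℕ) (A B : Matrix (Fin n) (Fin n) ℂ)
    (hA : A.PosSemidef) (hB : B.PosSemidef) (l : ℝ) (hl0 : 0 ≤ l) (hl1 : l ≤ 1) :
    (cfc (fun t : ℝ => Real.sqrt (t * (t + 1))) (l • A + (1 - l) • B) -
      (l • cfc (fun t : ℝ => Real.sqrt (t * (t + 1))) A +
        (1 - l) • cfc (fun t : ℝ => Real.sqrt (t * (t + 1))) B)).PosSemidef := by
  set ξ : ℝ → ℝ := fun t => Real.sqrt (t * (t + 1)) with hξdef
  rcases eq_or_lt_of_le hl0 with h0 | h0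
  · simp only [← h0, zero_smul, zero_add, sub_zero, one_smul, sub_self]
    exact Matrix.PosSemidef.zero
  rcases eq_or_lt_of_le hl1 with h1 | h1
  · simp only [h1, one_smul, sub_self, zero_smul, add_zero, smul_zero]
    exact Matrix.PosSemidef.zero
  have hl1' : 0 < 1 - l := by linarith
  have hAh := hA.1
  have hBh := hB.1
  have hC : (l • A + (1 - l) • B).PosSemidef :=
    (psd_smul A hA l hl0).add (psd_smul B hB (1 - l) (by linarith))
  have hCh := hC.1
  have eA : ∀ i, 0 ≤ hAh.eigenvalues i := hA.eigenvalues_nonneg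
  have eB : ∀ i, 0 ≤ hBh.eigenvalues i := hB.eigenvalues_nonneg
  have eC : ∀ i, 0 ≤ hCh.eigenvalues i := hC.eigenvalues_nonneg
  -- the players
  set P : Matrix (Fin n) (Fin n) ℂ := hAh.cfc (fun t => l * (t + 1)) with hPdef
  set P' : Matrix (Fin n) (Fin n) ℂ := hAh.cfc (fun t => (l * (t + 1))⁻¹) with hP'def
  set X : Matrix (Fin n) (Fin n) ℂ := hAh.cfc (fun t => l * ξ t) with hXdef
  set Q : Matrix (Fin n) (Fin n) ℂ := hBh.cfc (fun t => (1 - l) * (t + 1)) with hQdef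
  set Q' : Matrix (Fin n) (Fin n) ℂ := hBh.cfc (fun t => ((1 - l) * (t + 1))⁻¹) with hQ'def
  set Y : Matrix (Fin n) (Fin n) ℂ := hBh.cfc (fun t => (1 - l) * ξ t) with hYdef
  set T : Matrix (Fin n) (Fin n) ℂ := hCh.cfc (fun t => (t + 1)⁻¹) with hTdef
  set E : Matrix (Fin n) (Fin n) ℂ := hCh.cfc (fun t => (Real.sqrt (t + 1))⁻¹) with hEdef
  set F : Matrix (Fin n) (Fin n) ℂ := hCh.cfc (fun t => Real.sqrt (t + 1)) with hFdef
  set G : Matrix (Fin n) (Fin n) ℂ :=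
    hCh.cfc (fun t => Real.sqrt t * (Real.sqrt (t + 1))⁻¹) with hGdef
  -- hermitian facts
  have hXh : X.IsHermitian := cfc_herm A hAh _
  have hYh : Y.IsHermitian := cfc_herm B hBh _
  have hPh : P.IsHermitian := cfc_herm A hAh _
  have hQh : Q.IsHermitian := cfc_herm B hBh _
  have hTh : T.IsHermitian := cfc_herm _ hCh _
  have hEh : E.IsHermitian := cfc_herm _ hCh _
  have hFh : F.IsHermitian := cfc_herm _ hCh _
  have hP'psd : P'.PosSemidef := cfc_psd A hAh _ (fun i => by
    have := eA i; positivity)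
  have hQ'psd : Q'.PosSemidef := cfc_psd B hBh _ (fun i => by
    have := eB i; positivity)
  -- inverse identities
  have hPP' : P * P' = 1 := by
    rw [hPdef, hP'def, cfc_mul_cfc,
      cfc_congr' A hAh _ (fun _ => 1) (fun i => mul_inv_cancel₀ (by nlinarith [eA i])),
      cfc_one']
  have hP'P : P' * P = 1 := by
    rw [hPdef, hP'def, cfc_mul_cfc,
      cfc_congr' A hAh _ (fun _ => 1) (fun i => inv_mul_cancel₀ (by nlinarith [eA i])),
      cfc_one']
  have hQQ' : Q * Q' = 1 := by
    rw [hQdef, hQ'def, cfc_mul_cfc,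
      cfc_congr' B hBh _ (fun _ => 1) (fun i => mul_inv_cancel₀ (by nlinarith [eB i])),
      cfc_one']
  have hQ'Q : Q' * Q = 1 := by
    rw [hQdef, hQ'def, cfc_mul_cfc,
      cfc_congr' B hBh _ (fun _ => 1) (fun i => inv_mul_cancel₀ (by nlinarith [eB i])),
      cfc_one']
  -- P + Q = C + 1
  have hPQ : P + Q = hCh.cfc (fun t => t + 1) := by
    have h1 : P = l • (A + 1) := by
      rw [hPdef, cfc_smul' A hAh l (fun t => t + 1),
        cfc_add' A hAh (fun t => t) (fun _ => 1), cfc_id', cfc_one']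
    have h2 : Q = (1 - l) • (B + 1) := by
      rw [hQdef, cfc_smul' B hBh (1 - l) (fun t => t + 1),
        cfc_add' B hBh (fun t => t) (fun _ => 1), cfc_id', cfc_one']
    have h3 : hCh.cfc (fun t => t + 1) = (l • A + (1 - l) • B) + 1 := by
      rw [cfc_add' _ hCh (fun t => t) (fun _ => 1), cfc_id', cfc_one']
    rw [h1, h2, h3]
    match_scalars <;> ring
  have hDT : (P + Q) * T = 1 := by
    rw [hPQ, hTdef, cfc_mul_cfc,
      cfc_congr' _ hCh _ (fun _ => 1) (fun i => mul_inv_cancel₀ (by nlinarith [eC i])),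
      cfc_one']
  have hTD : T * (P + Q) = 1 := by
    rw [hPQ, hTdef, cfc_mul_cfc,
      cfc_congr' _ hCh _ (fun _ => 1) (fun i => inv_mul_cancel₀ (by nlinarith [eC i])),
      cfc_one']
  -- step 1 : C - Z T Z is PSD
  have step1 := key_ineq X Y P Q P' Q' T hXh hYh hPh hQh hP'psd hQ'psd hTh
    hPP' hP'P hQQ' hQ'Q hDT hTD
  have hsq : ∀ t : ℝ, 0 ≤ t → ξ t * ξ t = t * (t + 1) := fun t ht =>
    Real.mul_self_sqrt (by nlinarith)
  have hXPX : X * P' * X = l • A := by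
    rw [hXdef, hP'def, cfc_mul_cfc, cfc_mul_cfc,
      cfc_congr' A hAh _ (fun t => l * t) (fun i => by
        have he := eA i
        have h2 := hsq _ he
        field_simp
        linear_combination h2),
      cfc_smul' A hAh l (fun t => t), cfc_id']
  have hYQY : Y * Q' * Y = (1 - l) • B := by
    rw [hYdef, hQ'def, cfc_mul_cfc, cfc_mul_cfc,
      cfc_congr' B hBh _ (fun t => (1 - l) * t) (fun i => by
        have he := eB i
        have h2 := hsq _ he
        field_simp
        linear_combination h2),
      cfc_smul' B hBh (1 - l) (fun t => t), cfc_id']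
  set Z : Matrix (Fin n) (Fin n) ℂ := X + Y with hZdef
  have step1' : ((l • A + (1 - l) • B) - Z * T * Z).PosSemidef := by
    have := step1
    rwa [hXPX, hYQY] at this
  -- step 2 : G - S is PSD where S = E Z E
  have hEE : E * E = T := by
    rw [hEdef, hTdef, cfc_mul_cfc]
    exact cfc_congr' _ hCh _ _ (fun i => by
      rw [← mul_inv, Real.mul_self_sqrt (by nlinarith [eC i])])
  set S : Matrix (Fin n) (Fin n) ℂ := E * Z * E with hSdef
  have hZpsd : Z.PosSemidef := by
    have hXpsd : X.PosSemidef := cfc_psd A hAh _ (fun i =>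
      mul_nonneg hl0 (Real.sqrt_nonneg _))
    have hYpsd : Y.PosSemidef := cfc_psd B hBh _ (fun i =>
      mul_nonneg (by linarith) (Real.sqrt_nonneg _))
    exact hXpsd.add hYpsd
  have hSpsd : S.PosSemidef := by
    have := hZpsd.conjTranspose_mul_mul_same E
    rwa [hEh.eq, ← hSdef] at this
  have hGpsd : G.PosSemidef := cfc_psd _ hCh _ (fun i =>
    mul_nonneg (Real.sqrt_nonneg _) (inv_nonneg.mpr (Real.sqrt_nonneg _)))
  have hGG : G * G = E * (l • A + (1 - l) • B) * E := by
    have h2 : E * hCh.cfc (fun t => t) * E = G * G := by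
      rw [hGdef, hEdef, cfc_mul_cfc, cfc_mul_cfc, cfc_mul_cfc]
      exact cfc_congr' _ hCh _ _ (fun i => by
        have he := eC i
        have h1 : Real.sqrt (hCh.eigenvalues i) * Real.sqrt (hCh.eigenvalues i)
            = hCh.eigenvalues i := Real.mul_self_sqrt he
        calc (Real.sqrt (hCh.eigenvalues i + 1))⁻¹ * hCh.eigenvalues i
              * (Real.sqrt (hCh.eigenvalues i + 1))⁻¹
            = (Real.sqrt (hCh.eigenvalues i) * Real.sqrt (hCh.eigenvalues i))
              * ((Real.sqrt (hCh.eigenvalues i + 1))⁻¹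
                * (Real.sqrt (hCh.eigenvalues i + 1))⁻¹) := by rw [h1]; ring
        _ = Real.sqrt (hCh.eigenvalues i) * (Real.sqrt (hCh.eigenvalues i + 1))⁻¹
              * (Real.sqrt (hCh.eigenvalues i) * (Real.sqrt (hCh.eigenvalues i + 1))⁻¹) := by
            ring)
    rw [cfc_id' _ hCh] at h2
    exact h2.symm
  have hSS : S * S = E * (Z * T * Z) * E := by
    rw [hSdef]
    calc E * Z * E * (E * Z * E) = E * Z * (E * E) * Z * E := by noncomm_ring
    _ = E * Z * T * Z * E := by rw [hEE]
    _ = E * (Z * T * Z) * E := by noncomm_ring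
  have hGS : (G * G - S * S).PosSemidef := by
    have heq : G * G - S * S
        = E.conjTranspose * ((l • A + (1 - l) • B) - Z * T * Z) * E := by
      rw [hEh.eq, hGG, hSS]
      noncomm_ring
    rw [heq]
    exact step1'.conjTranspose_mul_mul_same E
  have step2 : (G - S).PosSemidef := sub_psd_of_sq_sub_sq_psd G S hGpsd hSpsd hGS
  -- step 3 : conjugate by F
  have hsne : ∀ i, Real.sqrt (hCh.eigenvalues i + 1) ≠ 0 := fun i => by
    have := eC i; positivity
  have hFE : F * E = 1 := by
    rw [hFdef, hEdef, cfc_mul_cfc,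
      cfc_congr' _ hCh _ (fun _ => 1) (fun i => mul_inv_cancel₀ (hsne i)), cfc_one']
  have hEF : E * F = 1 := by
    rw [hFdef, hEdef, cfc_mul_cfc,
      cfc_congr' _ hCh _ (fun _ => 1) (fun i => inv_mul_cancel₀ (hsne i)), cfc_one']
  have hFGF : F * G * F = hCh.cfc ξ := by
    rw [hFdef, hGdef, cfc_mul_cfc, cfc_mul_cfc]
    exact cfc_congr' _ hCh _ _ (fun i => by
      have he := eC i
      rw [hξdef]
      simp only
      rw [Real.sqrt_mul he]
      field_simp)
  have hFSF : F * S * F = Z := by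
    rw [hSdef]
    calc F * (E * Z * E) * F = (F * E) * Z * (E * F) := by noncomm_ring
    _ = Z := by rw [hFE, hEF, one_mul, mul_one]
  have final : hCh.cfc ξ - Z = F.conjTranspose * (G - S) * F := by
    rw [hFh.eq, mul_sub, sub_mul, hFGF, hFSF]
  -- conclude
  have goal_eq : cfc ξ (l • A + (1 - l) • B) - (l • cfc ξ A + (1 - l) • cfc ξ B)
      = hCh.cfc ξ - Z := by
    rw [Matrix.IsHermitian.cfc_eq hCh ξ, Matrix.IsHermitian.cfc_eq hAh ξ,
      Matrix.IsHermitian.cfc_eq hBh ξ, hZdef, hXdef, hYdef,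
      cfc_smul' A hAh l ξ, cfc_smul' B hBh (1 - l) ξ]
  rw [goal_eq, final]
  exact step2.conjTranspose_mul_mul_same F
end

section
/- If U : H → K is a linear contraction between Hilbert spaces (‖U‖ ≤ 1), B a bounded positive semidefinite self-adjoint operator on K, and ξ : [0,∞) → ℝ operator concave with ξ(0) ≥ 0, then ξ(U*BU) ≥ U*ξ(B)U in the Loewner order. -/
open Matrix Polynomial
open scoped ComplexOrder InnerProductSpace

section aux
variable {n m : Type*} [Fintype n] [DecidableEq n] [Fintype m] [DecidableEq m]

private lemma fromBlocks_pow' (A : Matrix n n ℂ) (B : Matrix m m ℂ) (j : ℕ) :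
    (fromBlocks A 0 0 B) ^ j = fromBlocks (A ^ j) 0 0 (B ^ j) := by
  induction j with
  | zero => simp [fromBlocks_one]
  | succ j ih => simp [pow_succ, ih, fromBlocks_multiply]

private lemma aeval_fromBlocks' (A : Matrix n n ℂ) (B : Matrix m m ℂ) (p : ℝ[X]) :
    aeval (fromBlocks A 0 0 B : Matrix (n ⊕ m) (n ⊕ m) ℂ) p
      = fromBlocks (aeval A p) 0 0 (aeval B p) := by
  induction p using Polynomial.induction_on' with
  | add p q hp hq => simp [map_add, hp, hq, fromBlocks_add]
  | monomial j a =>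
      simp only [aeval_monomial, Algebra.algebraMap_eq_smul_one, smul_mul_assoc, one_mul,
        fromBlocks_pow', fromBlocks_smul, smul_zero]

private lemma pow_comm_of_comm' {k h : ℕ} (X : Matrix (Fin k) (Fin h) ℂ)
    (A : Matrix (Fin h) (Fin h) ℂ) (B : Matrix (Fin k) (Fin k) ℂ)
    (hc : B * X = X * A) (j : ℕ) : B ^ j * X = X * A ^ j := by
  induction j with
  | zero => simp
  | succ j ih =>
      rw [pow_succ, pow_succ, Matrix.mul_assoc, hc, ← Matrix.mul_assoc, ih, Matrix.mul_assoc]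

private lemma aeval_comm' {k h : ℕ} (X : Matrix (Fin k) (Fin h) ℂ)
    (A : Matrix (Fin h) (Fin h) ℂ) (B : Matrix (Fin k) (Fin k) ℂ)
    (hc : B * X = X * A) (p : ℝ[X]) : aeval B p * X = X * aeval A p := by
  induction p using Polynomial.induction_on' with
  | add p q hp hq => simp [map_add, Matrix.add_mul, Matrix.mul_add, hp, hq]
  | monomial j a =>
      simp only [aeval_monomial, Algebra.algebraMap_eq_smul_one, smul_mul_assoc, one_mul,
        Matrix.smul_mul, Matrix.mul_smul]
      rw [pow_comm_of_comm' X A B hc j]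

private lemma aeval_conj' (W A : Matrix n n ℂ) (hW : W * Wᴴ = 1) (hW' : Wᴴ * W = 1) (p : ℝ[X]) :
    aeval (Wᴴ * A * W) p = Wᴴ * aeval A p * W := by
  induction p using Polynomial.induction_on' with
  | add p q hp hq => simp [map_add, hp, hq, mul_add, add_mul]
  | monomial j a =>
      simp only [aeval_monomial, Algebra.algebraMap_eq_smul_one, smul_mul_assoc, one_mul,
        mul_smul_comm]
      congr 1
      induction j with
      | zero => simpa using hW'.symm
      | succ j ih =>
          rw [pow_succ, ih, pow_succ]
          calc Wᴴ * A ^ j * W * (Wᴴ * A * W) = Wᴴ * A ^ j * (W * Wᴴ) * (A * W) := by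
                simp only [mul_assoc]
            _ = Wᴴ * (A ^ j * A) * W := by rw [hW]; simp only [mul_one, mul_assoc]

private lemma cfc_eq_aeval' {A : Matrix n n ℂ} (hA : A.IsHermitian) (f : ℝ → ℝ) (p : ℝ[X])
    (hp : ∀ x ∈ spectrum ℝ A, p.eval x = f x) : hA.cfc f = aeval A p := by
  have ha : IsSelfAdjoint A := hA
  rw [← Matrix.IsHermitian.cfc_eq]
  have h1 : cfc f A = cfc (fun x : ℝ => p.eval (id x)) A :=
    cfc_congr (fun x hx => (hp x hx).symm)
  rw [h1, cfc_map_polynomial p id A, cfc_id ℝ A]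

private lemma posSemidef_fromBlocks_diag' {A : Matrix n n ℂ} {B : Matrix m m ℂ}
    (hA : A.PosSemidef) (hB : B.PosSemidef) :
    (fromBlocks A 0 0 B).PosSemidef := by
  refine PosSemidef.of_dotProduct_mulVec_nonneg ?_ ?_
  · show _ᴴ = _
    rw [fromBlocks_conjTranspose]
    simp [hA.1.eq, hB.1.eq]
  · intro x
    have h1 := hA.dotProduct_mulVec_nonneg (x ∘ Sum.inl)
    have h2 := hB.dotProduct_mulVec_nonneg (x ∘ Sum.inr)
    have : star x ⬝ᵥ (fromBlocks A 0 0 B *ᵥ x)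
        = star (x ∘ Sum.inl) ⬝ᵥ (A *ᵥ (x ∘ Sum.inl))
          + star (x ∘ Sum.inr) ⬝ᵥ (B *ᵥ (x ∘ Sum.inr)) := by
      simp [dotProduct, Fintype.sum_sum_type, mulVec, fromBlocks, Finset.mul_sum]
    rw [this]
    exact add_nonneg h1 h2

private lemma posSemidef_block11' {A : Matrix n n ℂ} {B : Matrix n m ℂ} {C : Matrix m n ℂ}
    {D : Matrix m m ℂ} (h : (fromBlocks A B C D).PosSemidef) : A.PosSemidef := by
  have := h.submatrix Sum.inl
  exact this

private lemma PosSemidef.smul_real' {M : Matrix n n ℂ} (hM : M.PosSemidef) {c : ℝ} (hc : 0 ≤ c) :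
    (c • M).PosSemidef := by
  refine PosSemidef.of_dotProduct_mulVec_nonneg ?_ ?_
  · show _ᴴ = _
    rw [conjTranspose_smul]
    simp [hM.1.eq]
  · intro x
    have := hM.dotProduct_mulVec_nonneg x
    have h1 : star x ⬝ᵥ ((c • M) *ᵥ x) = (c : ℂ) * (star x ⬝ᵥ (M *ᵥ x)) := by
      simp [smul_mulVec, dotProduct_smul, Complex.real_smul]
    rw [h1]
    exact mul_nonneg (by exact_mod_cast hc) this

private lemma posSemidef_one_sub_mul_conjTranspose' {h k : ℕ} (U : Matrix (Fin k) (Fin h) ℂ)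
    (hU : ((1 : Matrix (Fin h) (Fin h) ℂ) - Uᴴ * U).PosSemidef) :
    ((1 : Matrix (Fin k) (Fin k) ℂ) - U * Uᴴ).PosSemidef := by
  refine PosSemidef.of_dotProduct_mulVec_nonneg ?_ ?_
  · show _ᴴ = _
    simp [conjTranspose_sub, conjTranspose_mul]
  · intro x
    set y : Fin h → ℂ := Uᴴ *ᵥ x with hy
    set z : Fin k → ℂ := U *ᵥ y with hz
    have hstary : star y = star x ᵥ* U := by
      rw [hy, star_mulVec, conjTranspose_conjTranspose]
    have hstarz : star z = star y ᵥ* Uᴴ := by rw [hz, star_mulVec]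
    let x' : EuclideanSpace ℂ (Fin k) := (WithLp.equiv 2 _).symm x
    let y' : EuclideanSpace ℂ (Fin h) := (WithLp.equiv 2 _).symm y
    let z' : EuclideanSpace ℂ (Fin k) := (WithLp.equiv 2 _).symm z
    have hxx : star x ⬝ᵥ x = ((‖x'‖ : ℂ)) ^ 2 := by
      rw [show star x ⬝ᵥ x = (inner ℂ x' x' : ℂ) from by rw [EuclideanSpace.inner_eq_star_dotProduct]; exact dotProduct_comm _ _, inner_self_eq_norm_sq_to_K]
      norm_cast
    have hyy : star y ⬝ᵥ y = ((‖y'‖ : ℂ)) ^ 2 := by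
      rw [show star y ⬝ᵥ y = (inner ℂ y' y' : ℂ) from by rw [EuclideanSpace.inner_eq_star_dotProduct]; exact dotProduct_comm _ _, inner_self_eq_norm_sq_to_K]
      norm_cast
    have hzz : star z ⬝ᵥ z = ((‖z'‖ : ℂ)) ^ 2 := by
      rw [show star z ⬝ᵥ z = (inner ℂ z' z' : ℂ) from by rw [EuclideanSpace.inner_eq_star_dotProduct]; exact dotProduct_comm _ _, inner_self_eq_norm_sq_to_K]
      norm_cast
    have h2 : ‖z'‖ ^ 2 ≤ ‖y'‖ ^ 2 := by
      have := hU.dotProduct_mulVec_nonneg y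
      rw [sub_mulVec, one_mulVec, dotProduct_sub, sub_nonneg, ← mulVec_mulVec,
        dotProduct_mulVec, ← hstarz, ← hz, hyy, hzz] at this
      exact_mod_cast this
    have hinner : (inner ℂ x' z' : ℂ) = ((‖y'‖ : ℂ)) ^ 2 := by
      rw [show (inner ℂ x' z' : ℂ) = star x ⬝ᵥ z from by rw [EuclideanSpace.inner_eq_star_dotProduct]; exact dotProduct_comm _ _, hz, dotProduct_mulVec, ← hstary, hyy]
    have h3 : ‖y'‖ ^ 2 ≤ ‖x'‖ * ‖z'‖ := by
      have := norm_inner_le_norm (𝕜 := ℂ) x' z'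
      rw [hinner] at this
      calc ‖y'‖ ^ 2 = ‖((‖y'‖:ℂ))^2‖ := by
            rw [norm_pow, Complex.norm_real, Real.norm_eq_abs, abs_of_nonneg (by positivity)]
        _ ≤ ‖x'‖ * ‖z'‖ := this
    have hkey : star x ⬝ᵥ ((1 - U * Uᴴ) *ᵥ x) = ((‖x'‖ ^ 2 - ‖y'‖ ^ 2 : ℝ) : ℂ) := by
      rw [sub_mulVec, one_mulVec, dotProduct_sub, ← mulVec_mulVec, dotProduct_mulVec, ← hstary,
        ← hy, hxx, hyy]
      push_cast
      ring
    rw [hkey, Complex.zero_le_real, sub_nonneg]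
    nlinarith [norm_nonneg x', norm_nonneg y', norm_nonneg z', h2, h3]

open scoped MatrixOrder in
private lemma herm_sqrt_facts' {A : Matrix n n ℂ} (hA : A.PosSemidef) :
    (hA.1.cfc Real.sqrt)ᴴ = hA.1.cfc Real.sqrt ∧
      hA.1.cfc Real.sqrt * hA.1.cfc Real.sqrt = A := by
  have ha : IsSelfAdjoint A := hA.1
  have h0 : (0 : Matrix n n ℂ) ≤ A := Matrix.nonneg_iff_posSemidef.mpr hA
  rw [← Matrix.IsHermitian.cfc_eq]
  refine ⟨cfc_predicate Real.sqrt A, ?_⟩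
  rw [← cfc_mul Real.sqrt Real.sqrt A]
  nth_rewrite 2 [← cfc_id ℝ A]
  exact cfc_congr fun x hx => Real.mul_self_sqrt (spectrum_nonneg_of_nonneg h0 hx)

end aux

set_option maxHeartbeats 2000000 in
/-- If `U : H → K` is a contraction, `B ≥ 0` self-adjoint on `K`, and `ξ` is operator
concave with `ξ(0) ≥ 0`, then `ξ(U*BU) ≥ U*ξ(B)U` in the Loewner order. -/
theorem cfc_conj_contraction_ge
    (h k : ℕ) (U : Matrix (Fin k) (Fin h) ℂ)
    -- `‖U‖ ≤ 1`, i.e. `U*U ≤ I` :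
    (hU : ((1 : Matrix (Fin h) (Fin h) ℂ) - Uᴴ * U).PosSemidef)
    (B : Matrix (Fin k) (Fin k) ℂ) (hB : B.PosSemidef)
    (ξ : ℝ → ℝ) (hξ0 : 0 ≤ ξ 0)
    -- operator concavity of `ξ` on positive semidefinite matrices:
    (hξop : ∀ (m : ℕ) (A B : Matrix (Fin m) (Fin m) ℂ)
      (hA : A.PosSemidef) (hB : B.PosSemidef) (l : ℝ), 0 ≤ l → l ≤ 1 →
      ∀ (hC : (l • A + (1 - l) • B).IsHermitian),
        (hC.cfc ξ - (l • hA.1.cfc ξ + (1 - l) • hB.1.cfc ξ)).PosSemidef)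
    (hUBU : (Uᴴ * B * U).IsHermitian) :
    (hUBU.cfc ξ - Uᴴ * hB.1.cfc ξ * U).PosSemidef := by
  classical
  have hT0 : ((1 : Matrix (Fin k) (Fin k) ℂ) - U * Uᴴ).PosSemidef :=
    posSemidef_one_sub_mul_conjTranspose' U hU
  set S : Matrix (Fin h) (Fin h) ℂ := hU.1.cfc Real.sqrt with hSdef
  set T : Matrix (Fin k) (Fin k) ℂ := hT0.1.cfc Real.sqrt with hTdef
  have hSH : Sᴴ = S := (herm_sqrt_facts' hU).1
  have hTH : Tᴴ = T := (herm_sqrt_facts' hT0).1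
  have hS2 : S * S = 1 - Uᴴ * U := (herm_sqrt_facts' hU).2
  have hT2 : T * T = 1 - U * Uᴴ := (herm_sqrt_facts' hT0).2
  -- intertwining `T * U = U * S`
  have hTU : T * U = U * S := by
    set E1 : Finset ℝ :=
      (Matrix.finite_real_spectrum (A := (1 : Matrix (Fin h) (Fin h) ℂ) - Uᴴ * U)).toFinset ∪
      (Matrix.finite_real_spectrum (A := (1 : Matrix (Fin k) (Fin k) ℂ) - U * Uᴴ)).toFinset
      with hE1
    set q := Lagrange.interpolate E1 id Real.sqrt with hq'
    have hq : ∀ x ∈ E1, q.eval x = Real.sqrt x := fun x hx => by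
      exact Lagrange.eval_interpolate_at_node (v := id) Real.sqrt (Set.injOn_id _) hx
    have hS' : S = aeval ((1 : Matrix (Fin h) (Fin h) ℂ) - Uᴴ * U) q := by
      rw [hSdef]
      exact cfc_eq_aeval' hU.1 Real.sqrt q fun x hx => hq x (by
        simp only [hE1, Finset.mem_union, Set.Finite.mem_toFinset]; exact Or.inl hx)
    have hT' : T = aeval ((1 : Matrix (Fin k) (Fin k) ℂ) - U * Uᴴ) q := by
      rw [hTdef]
      exact cfc_eq_aeval' hT0.1 Real.sqrt q fun x hx => hq x (by
        simp only [hE1, Finset.mem_union, Set.Finite.mem_toFinset]; exact Or.inr hx)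
    have hcomm : ((1 : Matrix (Fin k) (Fin k) ℂ) - U * Uᴴ) * U
        = U * ((1 : Matrix (Fin h) (Fin h) ℂ) - Uᴴ * U) := by
      simp [Matrix.sub_mul, Matrix.mul_sub, Matrix.mul_assoc]
    rw [hS', hT']
    exact aeval_comm' U _ _ hcomm q
  have hUT : Uᴴ * T = S * Uᴴ := by
    have := congrArg conjTranspose hTU
    simpa [conjTranspose_mul, hSH, hTH] using this
  -- unitary dilations
  set 𝒰 : Matrix (Fin h ⊕ Fin k) (Fin h ⊕ Fin k) ℂ := fromBlocks S (-Uᴴ) U T with h𝒰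
  set 𝒱 : Matrix (Fin h ⊕ Fin k) (Fin h ⊕ Fin k) ℂ := fromBlocks S Uᴴ U (-T) with h𝒱
  have h𝒰H : 𝒰ᴴ = fromBlocks S Uᴴ (-U) T := by
    rw [h𝒰, fromBlocks_conjTranspose]
    simp [hSH, hTH]
  have h𝒱H : 𝒱ᴴ = 𝒱 := by
    rw [h𝒱, fromBlocks_conjTranspose]
    simp [hSH, hTH]
  have hSS : S * S + Uᴴ * U = 1 := by rw [hS2]; abel
  have hTT : U * Uᴴ + T * T = 1 := by rw [hT2]; abel
  have h𝒰u : 𝒰 * 𝒰ᴴ = 1 := by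
    rw [h𝒰H, h𝒰, fromBlocks_multiply]
    simp [Matrix.neg_mul, Matrix.mul_neg, hUT, hTU]
    rw [hSS, hTT, fromBlocks_one]
  have h𝒰u' : 𝒰ᴴ * 𝒰 = 1 := by
    rw [h𝒰H, h𝒰, fromBlocks_multiply]
    simp [Matrix.neg_mul, Matrix.mul_neg, hUT, hTU]
    rw [hSS, hTT, fromBlocks_one]
  have h𝒱u : 𝒱 * 𝒱ᴴ = 1 := by
    rw [h𝒱H, h𝒱, fromBlocks_multiply]
    simp [Matrix.neg_mul, Matrix.mul_neg, hUT, hTU]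
    rw [hSS, hTT, fromBlocks_one]
  have h𝒱u' : 𝒱ᴴ * 𝒱 = 1 := by rw [h𝒱H] at h𝒱u ⊢; exact h𝒱u
  -- the dilated matrix and its conjugates
  set M : Matrix (Fin h ⊕ Fin k) (Fin h ⊕ Fin k) ℂ := fromBlocks 0 0 0 B with hMdef
  have hM : M.PosSemidef := posSemidef_fromBlocks_diag' .zero hB
  set A₁ : Matrix (Fin h ⊕ Fin k) (Fin h ⊕ Fin k) ℂ := 𝒰ᴴ * M * 𝒰 with hA₁def
  set A₂ : Matrix (Fin h ⊕ Fin k) (Fin h ⊕ Fin k) ℂ := 𝒱ᴴ * M * 𝒱 with hA₂def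
  have hA₁ : A₁.PosSemidef := hM.conjTranspose_mul_mul_same 𝒰
  have hA₂ : A₂.PosSemidef := hM.conjTranspose_mul_mul_same 𝒱
  set C : Matrix (Fin h ⊕ Fin k) (Fin h ⊕ Fin k) ℂ :=
    (2⁻¹ : ℝ) • A₁ + (1 - (2⁻¹ : ℝ)) • A₂ with hCdef
  have hC : C.PosSemidef :=
    (PosSemidef.smul_real' hA₁ (by norm_num)).add (PosSemidef.smul_real' hA₂ (by norm_num))
  -- convex-combination helpers
  have hhalf : ∀ {a b : Type} (X : Matrix a b ℂ),
      (2⁻¹ : ℝ) • X + (1 - (2⁻¹ : ℝ)) • X = X := by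
    intro a b X
    rw [← add_smul]
    norm_num
  have hhalf0 : ∀ {a b : Type} (X : Matrix a b ℂ),
      (2⁻¹ : ℝ) • X + (1 - (2⁻¹ : ℝ)) • (-X) = 0 := by
    intro a b X
    rw [smul_neg, show (1 - (2⁻¹:ℝ)) = 2⁻¹ by norm_num, add_neg_cancel]
  -- block forms
  have hA₁b : A₁ = fromBlocks (Uᴴ * B * U) (Uᴴ * B * T) (T * B * U) (T * B * T) := by
    rw [hA₁def, h𝒰H, h𝒰, hMdef, fromBlocks_multiply, fromBlocks_multiply]
    simp [Matrix.mul_assoc]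
  have hA₂b : A₂ = fromBlocks (Uᴴ * B * U) (-(Uᴴ * B * T)) (-(T * B * U)) (T * B * T) := by
    rw [hA₂def, h𝒱H, h𝒱, hMdef, fromBlocks_multiply, fromBlocks_multiply]
    simp [Matrix.mul_assoc]
  have hCb : C = fromBlocks (Uᴴ * B * U) 0 0 (T * B * T) := by
    rw [hCdef, hA₁b, hA₂b, fromBlocks_smul, fromBlocks_smul, fromBlocks_add]
    rw [hhalf, hhalf0, hhalf0, hhalf]
  -- reindex to `Fin (h + k)`
  set e : Fin h ⊕ Fin k ≃ Fin (h + k) := finSumFinEquiv with hedef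
  set r := Matrix.reindexAlgEquiv ℝ ℂ e with hrdef
  have hrPSD : ∀ X : Matrix (Fin h ⊕ Fin k) (Fin h ⊕ Fin k) ℂ,
      X.PosSemidef → (r X).PosSemidef := by
    intro X hX
    simpa [hrdef, Matrix.reindexAlgEquiv_apply, Matrix.reindex_apply] using hX.submatrix ⇑e.symm
  have hrPSD' : ∀ X : Matrix (Fin h ⊕ Fin k) (Fin h ⊕ Fin k) ℂ,
      (r X).PosSemidef → X.PosSemidef := by
    intro X hX
    have := hX.submatrix ⇑e
    simpa [hrdef, Matrix.reindexAlgEquiv_apply, Matrix.reindex_apply] using this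
  have hCr : (2⁻¹ : ℝ) • r A₁ + (1 - (2⁻¹ : ℝ)) • r A₂ = r C := by
    rw [hCdef, map_add, _root_.map_smul, _root_.map_smul]
  have hC' : ((2⁻¹ : ℝ) • r A₁ + (1 - (2⁻¹ : ℝ)) • r A₂).IsHermitian := by
    rw [hCr]; exact (hrPSD C hC).1
  have key := hξop (h + k) (r A₁) (r A₂) (hrPSD A₁ hA₁) (hrPSD A₂ hA₂) 2⁻¹
    (by norm_num) (by norm_num) hC'
  -- interpolation polynomial
  set E : Finset ℝ := insert (0 : ℝ)
    ((Matrix.finite_real_spectrum (A := A₁)).toFinset ∪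
     (Matrix.finite_real_spectrum (A := A₂)).toFinset ∪
     (Matrix.finite_real_spectrum (A := C)).toFinset ∪
     (Matrix.finite_real_spectrum (A := B)).toFinset ∪
     (Matrix.finite_real_spectrum (A := Uᴴ * B * U)).toFinset ∪
     (Matrix.finite_real_spectrum (A := T * B * T)).toFinset) with hE
  set p := Lagrange.interpolate E id ξ with hpdef
  have hpE : ∀ x ∈ E, p.eval x = ξ x := fun x hx => by
    exact Lagrange.eval_interpolate_at_node (v := id) ξ (Set.injOn_id _) hx
  have hmem : ∀ x : ℝ,
      (x = 0 ∨ x ∈ spectrum ℝ A₁ ∨ x ∈ spectrum ℝ A₂ ∨ x ∈ spectrum ℝ C ∨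
        x ∈ spectrum ℝ B ∨ x ∈ spectrum ℝ (Uᴴ * B * U) ∨ x ∈ spectrum ℝ (T * B * T)) →
      x ∈ E := by
    intro x hx
    simp only [hE, Finset.mem_insert, Finset.mem_union, Set.Finite.mem_toFinset]
    tauto
  -- rewrite the three `cfc`s as polynomial evaluations
  have e₁ : (hrPSD A₁ hA₁).1.cfc ξ = r (aeval A₁ p) := by
    rw [cfc_eq_aeval' _ ξ p (fun x hx => hpE x (hmem x (by
      rw [AlgEquiv.spectrum_eq] at hx; tauto))), hrdef, Polynomial.aeval_algHom_apply]
  have e₂ : (hrPSD A₂ hA₂).1.cfc ξ = r (aeval A₂ p) := by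
    rw [cfc_eq_aeval' _ ξ p (fun x hx => hpE x (hmem x (by
      rw [AlgEquiv.spectrum_eq] at hx; tauto))), hrdef, Polynomial.aeval_algHom_apply]
  have e₃ : hC'.cfc ξ = r (aeval C p) := by
    have hspec : spectrum ℝ ((2⁻¹ : ℝ) • r A₁ + (1 - (2⁻¹ : ℝ)) • r A₂) = spectrum ℝ C := by
      rw [hCr, AlgEquiv.spectrum_eq]
    rw [cfc_eq_aeval' hC' ξ p (fun x hx => hpE x (hmem x (by rw [hspec] at hx; tauto)))]
    rw [hCr, hrdef, Polynomial.aeval_algHom_apply]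
  rw [e₁, e₂, e₃] at key
  have hZr : r (aeval C p) - ((2⁻¹ : ℝ) • r (aeval A₁ p) + (1 - (2⁻¹ : ℝ)) • r (aeval A₂ p))
      = r (aeval C p - ((2⁻¹ : ℝ) • aeval A₁ p + (1 - (2⁻¹ : ℝ)) • aeval A₂ p)) := by
    rw [map_sub, map_add, _root_.map_smul, _root_.map_smul]
  rw [hZr] at key
  have hZ : (aeval C p - ((2⁻¹ : ℝ) • aeval A₁ p + (1 - (2⁻¹ : ℝ)) • aeval A₂ p)).PosSemidef :=
    hrPSD' _ key
  -- compute the blocks of Z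
  have h0p : aeval (0 : Matrix (Fin h) (Fin h) ℂ) p
      = (ξ 0) • (1 : Matrix (Fin h) (Fin h) ℂ) := by
    rw [← Polynomial.coeff_zero_eq_aeval_zero', Polynomial.coeff_zero_eq_eval_zero,
      hpE 0 (hmem 0 (Or.inl rfl)), Algebra.algebraMap_eq_smul_one]
  set N₂ : Matrix (Fin k) (Fin k) ℂ := aeval B p with hN₂
  have haevM : aeval M p = fromBlocks ((ξ 0) • 1) 0 0 N₂ := by
    rw [hMdef, aeval_fromBlocks', h0p, hN₂]
  have haevA₁ : aeval A₁ p = 𝒰ᴴ * (fromBlocks ((ξ 0) • 1) 0 0 N₂) * 𝒰 := by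
    rw [hA₁def, aeval_conj' 𝒰 M h𝒰u h𝒰u' p, haevM]
  have haevA₂ : aeval A₂ p = 𝒱ᴴ * (fromBlocks ((ξ 0) • 1) 0 0 N₂) * 𝒱 := by
    rw [hA₂def, aeval_conj' 𝒱 M h𝒱u h𝒱u' p, haevM]
  have haevC : aeval C p = fromBlocks (aeval (Uᴴ * B * U) p) 0 0 (aeval (T * B * T) p) := by
    rw [hCb, aeval_fromBlocks']
  have hu : 𝒰ᴴ * (fromBlocks ((ξ 0) • 1) 0 0 N₂) * 𝒰
      = fromBlocks ((ξ 0) • (S * S) + Uᴴ * N₂ * U)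
          (-((ξ 0) • (S * Uᴴ)) + Uᴴ * N₂ * T)
          (-((ξ 0) • (U * S)) + T * N₂ * U)
          ((ξ 0) • (U * Uᴴ) + T * N₂ * T) := by
    rw [h𝒰H, h𝒰, fromBlocks_multiply, fromBlocks_multiply]
    simp [Matrix.mul_assoc, Matrix.mul_smul, Matrix.smul_mul, Matrix.neg_mul, Matrix.mul_neg]
  have hv : 𝒱ᴴ * (fromBlocks ((ξ 0) • 1) 0 0 N₂) * 𝒱
      = fromBlocks ((ξ 0) • (S * S) + Uᴴ * N₂ * U)
          (-(-((ξ 0) • (S * Uᴴ)) + Uᴴ * N₂ * T))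
          (-(-((ξ 0) • (U * S)) + T * N₂ * U))
          ((ξ 0) • (U * Uᴴ) + T * N₂ * T) := by
    rw [h𝒱H, h𝒱, fromBlocks_multiply, fromBlocks_multiply]
    simp [Matrix.mul_assoc, Matrix.mul_smul, Matrix.smul_mul, Matrix.neg_mul, Matrix.mul_neg]
    constructor <;> abel
  have hZblocks : aeval C p - ((2⁻¹ : ℝ) • aeval A₁ p + (1 - (2⁻¹ : ℝ)) • aeval A₂ p)
      = fromBlocks
          (aeval (Uᴴ * B * U) p - ((ξ 0) • (S * S) + Uᴴ * N₂ * U)) 0 0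
          (aeval (T * B * T) p - ((ξ 0) • (U * Uᴴ) + T * N₂ * T)) := by
    rw [haevC, haevA₁, haevA₂, hu, hv, fromBlocks_smul, fromBlocks_smul, fromBlocks_add,
      hhalf, hhalf, hhalf0, hhalf0, sub_eq_add_neg, fromBlocks_neg, fromBlocks_add]
    simp [sub_eq_add_neg]
  rw [hZblocks] at hZ
  have hZ₁ := posSemidef_block11' hZ
  -- conclude
  rw [cfc_eq_aeval' hUBU ξ p (fun x hx => hpE x (hmem x (by tauto))),
    cfc_eq_aeval' hB.1 ξ p (fun x hx => hpE x (hmem x (by tauto))), ← hN₂]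
  have hfinal : aeval (Uᴴ * B * U) p - Uᴴ * N₂ * U
      = (aeval (Uᴴ * B * U) p - ((ξ 0) • (S * S) + Uᴴ * N₂ * U)) + (ξ 0) • (S * S) := by
    abel
  rw [hS2] at hZ₁
  rw [hfinal, hS2]
  exact hZ₁.add (PosSemidef.smul_real' hU hξ0)
end

section
/- Averaging identity for the dilation: with U, B, 𝒰, 𝒱 as in the dilation construction, (1/2)·𝒰*·diag(0,B)·𝒰 + (1/2)·𝒱*·diag(0,B)·𝒱 = diag( U*BU , (I−UU*)^{1/2} B (I−UU*)^{1/2} ) as operators on H ⊕ K. -/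
open Matrix
open scoped ComplexOrder

/-- The positive semidefinite square root of a positive semidefinite matrix
(as defined in Mathlib of December 2024; since removed from Mathlib). -/
noncomputable def Matrix.PosSemidef.sqrt {n 𝕜 : Type*} [Fintype n] [RCLike 𝕜] [DecidableEq n]
    {A : Matrix n n 𝕜} (hA : A.PosSemidef) : Matrix n n 𝕜 :=
  hA.1.eigenvectorUnitary.1 * diagonal ((↑) ∘ (√·) ∘ hA.1.eigenvalues) *
  (star hA.1.eigenvectorUnitary : Matrix n n 𝕜)

/-- Averaging identity for the dilation:
`(1/2)𝒰* diag(0,B) 𝒰 + (1/2)𝒱* diag(0,B) 𝒱 = diag(U*BU, (I−UU*)^{1/2} B (I−UU*)^{1/2})`. -/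
theorem dilation_average_identity
    (h k : ℕ) (U : Matrix (Fin k) (Fin h) ℂ)
    (hU1 : ((1 : Matrix (Fin h) (Fin h) ℂ) - Uᴴ * U).PosSemidef)
    (hU2 : ((1 : Matrix (Fin k) (Fin k) ℂ) - U * Uᴴ).PosSemidef)
    (B : Matrix (Fin k) (Fin k) ℂ) (hB : B.IsHermitian) :
    (1 / 2 : ℂ) • ((Matrix.fromBlocks hU1.sqrt (-Uᴴ) U hU2.sqrt)ᴴ *
        Matrix.fromBlocks 0 0 0 B * Matrix.fromBlocks hU1.sqrt (-Uᴴ) U hU2.sqrt) +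
      (1 / 2 : ℂ) • ((Matrix.fromBlocks hU1.sqrt Uᴴ U (-hU2.sqrt))ᴴ *
        Matrix.fromBlocks 0 0 0 B * Matrix.fromBlocks hU1.sqrt Uᴴ U (-hU2.sqrt)) =
      Matrix.fromBlocks (Uᴴ * B * U) 0 0 (hU2.sqrt * B * hU2.sqrt) := by
  have hS : hU2.sqrtᴴ = hU2.sqrt := by
    unfold Matrix.PosSemidef.sqrt
    simp [Matrix.mul_assoc, Matrix.diagonal_conjTranspose, Matrix.star_eq_conjTranspose]
    congr 3
    funext i
    simp
  simp only [fromBlocks_conjTranspose, fromBlocks_multiply, conjTranspose_neg,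
    conjTranspose_conjTranspose, hS, Matrix.mul_zero, Matrix.zero_mul, zero_add, add_zero,
    Matrix.fromBlocks_smul, Matrix.fromBlocks_add, Matrix.neg_mul, Matrix.mul_neg, neg_neg,
    smul_zero]
  rw [Matrix.fromBlocks_inj]
  refine ⟨by module, by module, by module, by module⟩
end
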